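/- For every integer d ≥ 1 and every real number λ ∈ [0,1], the polynomial A_d^λ(t), defined by the power-series identity Σ_{n≥0} (n+λ)^d t^n = A_d^λ(t)/(1−t)^{d+1}, has only nonnegative coefficients. -/

import Mathlib

open scoped PowerSeries

noncomputable def genP (lam : ℝ) : ℕ → Polynomial ℝ
  | 0 => 1
  | d + 1 =>
      Polynomial.X * (1 - Polynomial.X) * (Polynomial.derivative (genP lam d))
        + (Polynomial.C ((d : ℝ) + 1) * Polynomial.X
            + Polynomial.C lam * (1 - Polynomial.X)) * genP lam d

lemma genP_spec (lam : ℝ) (d : ℕ) :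
    (PowerSeries.mk fun n => ((n : ℝ) + lam) ^ d) * (1 - PowerSeries.X) ^ (d + 1)
      = ((genP lam d : Polynomial ℝ) : PowerSeries ℝ) := by
  induction d with
  | zero =>
      have h : (PowerSeries.mk fun n => ((n : ℝ) + lam) ^ 0) = PowerSeries.mk fun _ => (1 : ℝ) := by
        ext n; simp
      rw [h, genP, pow_one, mul_sub, mul_one]
      ext n
      cases n with
      | zero => simp
      | succ m => simp [PowerSeries.coeff_succ_mul_X, Polynomial.coeff_one, Nat.succ_ne_zero]
  | succ d ih =>
      set F : PowerSeries ℝ := PowerSeries.mk fun n => ((n : ℝ) + lam) ^ d with hF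
      set D : PowerSeries ℝ := PowerSeries.derivative ℝ F with hD
      have h1 : (PowerSeries.mk fun n => ((n : ℝ) + lam) ^ (d + 1))
          = PowerSeries.X * D + PowerSeries.C lam * F := by
        ext n
        cases n with
        | zero =>
            simp [hD, hF, pow_succ, mul_comm]
        | succ m =>
            rw [map_add, PowerSeries.coeff_succ_X_mul, hD, PowerSeries.coeff_derivative,
              PowerSeries.coeff_C_mul, hF]
            simp only [PowerSeries.coeff_mk]
            push_cast
            ring
      have hdX : PowerSeries.derivative ℝ (1 - PowerSeries.X : ℝ⟦X⟧) = -1 := by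
        rw [map_sub]; simp
      have h2 := congrArg (PowerSeries.derivative ℝ) ih
      rw [Derivation.leibniz, Derivation.leibniz_pow, hdX, PowerSeries.derivative_coe, ← hD] at h2
      have h2' : D * (1 - PowerSeries.X) ^ (d + 1)
          = ((Polynomial.derivative (genP lam d) : Polynomial ℝ) : ℝ⟦X⟧)
            + PowerSeries.C ((d : ℝ) + 1) * (1 - PowerSeries.X) ^ d * F := by
        have hc : ((d + 1 : ℕ) : ℝ⟦X⟧) = PowerSeries.C ((d : ℝ) + 1) := by
          rw [← map_natCast (PowerSeries.C (R := ℝ)) (d + 1)]; push_cast; ring_nf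
        rw [smul_eq_mul, smul_eq_mul, smul_eq_mul, nsmul_eq_mul, hc] at h2
        simp only [Nat.add_sub_cancel] at h2
        linear_combination h2
      rw [h1, genP]
      push_cast [Polynomial.coe_add, Polynomial.coe_mul, Polynomial.coe_sub, Polynomial.coe_X,
        Polynomial.coe_one, Polynomial.coe_C]
      linear_combination (PowerSeries.X * (1 - PowerSeries.X)) * h2'
        + (PowerSeries.C ((d : ℝ) + 1) * PowerSeries.X
            + PowerSeries.C lam * (1 - PowerSeries.X)) * ih

lemma genP_coeff_succ (lam : ℝ) (d m : ℕ) :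
    (genP lam (d + 1)).coeff (m + 1)
      = ((m : ℝ) + 1 + lam) * (genP lam d).coeff (m + 1)
        + ((d : ℝ) + 1 - m - lam) * (genP lam d).coeff m := by
  set p := genP lam d with hp
  have e : genP lam (d + 1)
      = Polynomial.X * (Polynomial.derivative p + Polynomial.C ((d : ℝ) + 1) * p)
        - Polynomial.X * (Polynomial.X * Polynomial.derivative p + Polynomial.C lam * p)
        + Polynomial.C lam * p := by
    rw [genP]; ring
  cases m with
  | zero =>
      rw [e]
      simp only [Polynomial.coeff_add, Polynomial.coeff_sub, Polynomial.coeff_X_mul,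
        Polynomial.coeff_C_mul, Polynomial.coeff_derivative, Polynomial.mul_coeff_zero,
        Polynomial.coeff_X_zero, Polynomial.coeff_C_zero, zero_mul]
      push_cast
      ring
  | succ m =>
      rw [e]
      simp only [Polynomial.coeff_add, Polynomial.coeff_sub, Polynomial.coeff_X_mul,
        Polynomial.coeff_C_mul, Polynomial.coeff_derivative]
      push_cast
      ring

lemma genP_coeff_zero (lam : ℝ) (d : ℕ) :
    (genP lam (d + 1)).coeff 0 = lam * (genP lam d).coeff 0 := by
  rw [genP]
  simp [Polynomial.mul_coeff_zero]

lemma genP_good (lam : ℝ) (h0 : 0 ≤ lam) (h1 : lam ≤ 1) :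
    ∀ d i, 0 ≤ (genP lam d).coeff i ∧ (d < i → (genP lam d).coeff i = 0) := by
  intro d
  induction d with
  | zero =>
      intro i
      rw [genP]
      constructor
      · simp [Polynomial.coeff_one]
        split <;> norm_num
      · intro hi
        simp [Polynomial.coeff_one]
        omega
  | succ d ih =>
      intro i
      cases i with
      | zero =>
          rw [genP_coeff_zero]
          exact ⟨mul_nonneg h0 (ih 0).1, by omega⟩
      | succ m =>
          rw [genP_coeff_succ]
          constructor
          · have t1 : 0 ≤ ((m : ℝ) + 1 + lam) * (genP lam d).coeff (m + 1) :=
              mul_nonneg (by positivity) (ih (m + 1)).1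
            have t2 : 0 ≤ ((d : ℝ) + 1 - m - lam) * (genP lam d).coeff m := by
              rcases le_or_gt m d with hmd | hmd
              · apply mul_nonneg _ (ih m).1
                have : (m : ℝ) ≤ d := by exact_mod_cast hmd
                linarith
              · rw [(ih m).2 hmd, mul_zero]
            linarith
          · intro hi
            rw [(ih (m + 1)).2 (by omega), (ih m).2 (by omega)]
            ring

/-- For every integer `d ≥ 1` and every real `λ ∈ [0,1]`, the generalized
Eulerian polynomial `A_d^λ(t)`, i.e. the (unique) polynomial satisfying
`Σ_{n≥0} (n+λ)^d t^n = A_d^λ(t)/(1−t)^{d+1}` as formal power series, has only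
nonnegative coefficients. -/
theorem eulerian_nonneg_coeffs (d : ℕ) (hd : 1 ≤ d) (lam : ℝ)
    (hlam0 : 0 ≤ lam) (hlam1 : lam ≤ 1) (A : Polynomial ℝ)
    (hA : (PowerSeries.mk fun n => ((n : ℝ) + lam) ^ d) * (1 - PowerSeries.X) ^ (d + 1)
        = (A : PowerSeries ℝ)) :
    ∀ i, 0 ≤ A.coeff i := by
  intro i
  have h := hA.symm.trans (genP_spec lam d)
  have hc : A.coeff i = (genP lam d).coeff i := by
    rw [← Polynomial.coeff_coe, ← Polynomial.coeff_coe, h]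
  rw [hc]
  exact (genP_good lam hlam0 hlam1 d i).1
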